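/- Let A be a unital C*-algebra, let L ∈ A be an isometry (L*L = 1), and let d, e ∈ A be self-adjoint elements satisfying L*dL = e, L*eL = d, and L*e²L = d². Then Ld = eL. -/
import Mathlib


/-- If `L` is an isometry in a unital C⋆-algebra and `d`, `e` are self-adjoint elements with
`L* d L = e`, `L* e L = d` and `L* e² L = d²`, then `L d = e L`. -/
theorem isometry_intertwines {A : Type*} [CStarAlgebra A]
    (L : A) (hL : star L * L = 1)
    (d e : A) (hd : IsSelfAdjoint d) (he : IsSelfAdjoint e)
    (h1 : star L * d * L = e) (h2 : star L * e * L = d)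
    (h3 : star L * e ^ 2 * L = d ^ 2) :
    L * d = e * L := by
  have key : star (L * d - e * L) * (L * d - e * L) = 0 := by
    have hA : d * (star L * L) * d = d ^ 2 := by rw [hL]; noncomm_ring
    have hB : d * (star L * e * L) = d ^ 2 := by rw [h2]; noncomm_ring
    have hC : (star L * e * L) * d = d ^ 2 := by rw [h2]; noncomm_ring
    calc star (L * d - e * L) * (L * d - e * L)
        = d * (star L * L) * d - d * (star L * e * L)
          - (star L * e * L) * d + star L * e ^ 2 * L := by
          simp only [star_sub, star_mul, hd.star_eq, he.star_eq]
          noncomm_ring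
      _ = 0 := by rw [hA, hB, hC, h3]; noncomm_ring
  have h0 := CStarRing.star_mul_self_eq_zero_iff (L * d - e * L) |>.mp key
  exact sub_eq_zero.mp h0
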